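/- Let Q = (Q_k) be a sequence with Q_0 = 1, Q increasing with Q_1 > 1, and define m_k := (k! Q_k)^{1/k} (m_0 := 1) and the check sequence recursively by m̌_0 = 1, m̌_{k+1} = m̌_k · (m_{k+1} − 1)/m_k. Then m_k = m̌_k · (1 + Σ_{j=1}^k 1/m̌_j) for all k ≥ 0. -/

import Mathlib

/-- For an increasing sequence `Q` with `Q 0 = 1`, `Q 1 > 1`, and
`m k = (k! Q k)^(1/k)` (`m 0 = 1`), the check sequence defined by
`m̌ 0 = 1`, `m̌ (k+1) = m̌ k * (m (k+1) - 1) / m k` satisfies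
`m k = m̌ k * (1 + ∑_{j=1}^k 1 / m̌ j)`. -/
theorem stmt9 (Q m mc : ℕ → ℝ) (hQpos : ∀ k, 0 < Q k) (hQ0 : Q 0 = 1)
    (hQmono : Monotone Q) (hQ1 : 1 < Q 1)
    (hm0 : m 0 = 1)
    (hm : ∀ k, 1 ≤ k → m k = ((k.factorial : ℝ) * Q k) ^ ((1 : ℝ) / k))
    (hmc0 : mc 0 = 1) (hmc : ∀ k, mc (k + 1) = mc k * (m (k + 1) - 1) / m k) :
    ∀ k, m k = mc k * (1 + ∑ j ∈ Finset.Icc 1 k, 1 / mc j) := by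
  have hm1 : ∀ k, 1 ≤ k → 1 < m k := by
    intro k hk
    rw [hm k hk]
    have hfac : (1 : ℝ) ≤ (k.factorial : ℝ) := by
      exact_mod_cast Nat.one_le_iff_ne_zero.mpr k.factorial_ne_zero
    have hQk : 1 < Q k := lt_of_lt_of_le hQ1 (hQmono hk)
    have hx : (1 : ℝ) < (k.factorial : ℝ) * Q k := by nlinarith
    rw [Real.one_lt_rpow_iff_of_pos (by linarith)]
    left
    refine ⟨hx, by positivity⟩
  have hmpos : ∀ k, 0 < m k := by
    intro k
    rcases Nat.eq_zero_or_pos k with h | h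
    · simp [h, hm0]
    · linarith [hm1 k h]
  have hmcpos : ∀ k, 0 < mc k := by
    intro k
    induction k with
    | zero => simp [hmc0]
    | succ n ih =>
      rw [hmc n]
      exact div_pos (mul_pos ih (by linarith [hm1 (n + 1) (by omega : 1 ≤ n + 1)])) (hmpos n)
  intro k
  induction k with
  | zero => simp [hm0, hmc0]
  | succ k ih =>
    rw [Finset.sum_Icc_succ_top (by omega : 1 ≤ k + 1)]
    have key : mc (k + 1) * (1 + ∑ j ∈ Finset.Icc 1 k, 1 / mc j) = m (k + 1) - 1 := by
      have hmk := (hmpos k).ne'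
      rw [hmc k]
      calc mc k * (m (k + 1) - 1) / m k * (1 + ∑ j ∈ Finset.Icc 1 k, 1 / mc j)
          = (m (k + 1) - 1) * (mc k * (1 + ∑ j ∈ Finset.Icc 1 k, 1 / mc j)) / m k := by ring
        _ = (m (k + 1) - 1) * m k / m k := by rw [← ih]
        _ = m (k + 1) - 1 := by field_simp
    have hmc1 : mc (k + 1) ≠ 0 := (hmcpos (k + 1)).ne'
    have : mc (k + 1) * ((1 + ∑ j ∈ Finset.Icc 1 k, 1 / mc j) + 1 / mc (k + 1))
        = mc (k + 1) * (1 + ∑ j ∈ Finset.Icc 1 k, 1 / mc j) + 1 := by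
      rw [mul_add, mul_one_div, div_self hmc1]
    rw [← add_assoc, this, key]
    ring
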